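/- Let n ≥ 1, let · be a quasigroup operation of order n on Fin n, and suppose (Fin n, ·) has two disjoint complete mappings σ and τ. Then there exists a quasigroup operation ∗ of order n+2 on Fin (n+2) such that, identifying Fin n with the first n elements of Fin (n+2), x∗y = x·y for all x, y < n with y ≠ σx and y ≠ τx (i.e., the prolonged quasigroup agrees with the original one on all cells not lying on the two transversals). -/
import Mathlib

/-- A binary operation on `Fin m` is a quasigroup operation if all left and
right translations are bijections. -/
def IsQuasigroup {m : ℕ} (f : Fin m → Fin m → Fin m) : Prop :=
  ∀ a : Fin m, Function.Bijective (fun x => f a x) ∧ Function.Bijective (fun x => f x a)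

namespace TwoStep
variable {n : ℕ}

def emb (x : Fin n) : Fin (n+2) := Fin.castAdd 2 x

def el0 : Fin (n+2) := ⟨n, by omega⟩
def el1 : Fin (n+2) := ⟨n+1, by omega⟩

def rowMapA (g : Fin n → Fin n) (p q : Fin n) (b : Fin (n+2)) : Fin (n+2) :=
  if hb : b.val < n then
    if (⟨b.val, hb⟩ : Fin n) = p then el0
    else if (⟨b.val, hb⟩ : Fin n) = q then el1
    else emb (g ⟨b.val, hb⟩)
  else if b.val = n then emb (g p) else emb (g q)

def rowMapB (h : Fin n → Fin n) (c : Bool) (b : Fin (n+2)) : Fin (n+2) :=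
  if hb : b.val < n then emb (h ⟨b.val, hb⟩)
  else if b.val = n then (if c then el0 else el1) else (if c then el1 else el0)

lemma emb_val (x : Fin n) : (emb x).val = x.val := rfl

lemma emb_ne_el0 (x : Fin n) : emb x ≠ (el0 : Fin (n+2)) := fun hx => by
  have h' := congrArg Fin.val hx; have := x.isLt
  simp only [emb_val, el0] at h'; omega

lemma emb_ne_el1 (x : Fin n) : emb x ≠ (el1 : Fin (n+2)) := fun hx => by
  have h' := congrArg Fin.val hx; have := x.isLt
  simp only [emb_val, el1] at h'; omega

lemma el0_ne_el1 : (el0 : Fin (n+2)) ≠ el1 := fun hx => by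
  have h' := congrArg Fin.val hx; simp only [el0, el1] at h'; omega

lemma emb_inj : Function.Injective (emb : Fin n → Fin (n+2)) := fun x y h =>
  Fin.ext (congrArg (fun z : Fin (n+2) => z.val) h)

lemma rowMapA_inj (g : Fin n → Fin n) (hg : Function.Injective g) (p q : Fin n)
    (hpq : p ≠ q) : Function.Injective (rowMapA g p q) := by
  intro b1 b2 h
  unfold rowMapA at h
  split_ifs at h <;>
    first
    | exact Fin.ext (by omega)
    | (apply Fin.ext; simp_all [Fin.ext_iff] <;> omega)
    | exact absurd h (emb_ne_el0 _)
    | exact absurd h.symm (emb_ne_el0 _)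
    | exact absurd h (emb_ne_el1 _)
    | exact absurd h.symm (emb_ne_el1 _)
    | exact absurd h el0_ne_el1
    | exact absurd h.symm el0_ne_el1
    | (have h2 := hg (emb_inj h)
       rw [Fin.ext_iff] at h2
       exact Fin.ext h2)
    | (exfalso; have h2 := hg (emb_inj h); simp_all [Fin.ext_iff] <;> omega)

lemma rowMapB_inj (h : Fin n → Fin n) (hh : Function.Injective h) (c : Bool) :
    Function.Injective (rowMapB h c) := by
  intro b1 b2 e
  unfold rowMapB at e
  cases c <;> simp only [if_true, if_false, Bool.false_eq_true] at e <;>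
  split_ifs at e <;>
    first
    | exact Fin.ext (by omega)
    | exact absurd e (emb_ne_el0 _)
    | exact absurd e.symm (emb_ne_el0 _)
    | exact absurd e (emb_ne_el1 _)
    | exact absurd e.symm (emb_ne_el1 _)
    | exact absurd e el0_ne_el1
    | exact absurd e.symm el0_ne_el1
    | (have h2 := hh (emb_inj e)
       rw [Fin.ext_iff] at h2
       exact Fin.ext h2)

end TwoStep

namespace TwoStep
variable {n : ℕ}

def starOp (f : Fin n → Fin n → Fin n) (σ τ : Equiv.Perm (Fin n))
    (a b : Fin (n+2)) : Fin (n+2) :=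
  if ha : a.val < n then rowMapA (f ⟨a.val, ha⟩) (σ ⟨a.val, ha⟩) (τ ⟨a.val, ha⟩) b
  else if a.val = n then rowMapB (fun y => f (σ.symm y) y) true b
  else rowMapB (fun y => f (τ.symm y) y) false b

variable (f : Fin n → Fin n → Fin n) (σ τ : Equiv.Perm (Fin n))

lemma mk_val_emb (y : Fin n) (h : (emb y : Fin (n+2)).val < n) :
    (⟨(emb y : Fin (n+2)).val, h⟩ : Fin n) = y := Fin.ext rfl

lemma col_emb (y : Fin n) :
    (fun a => starOp f σ τ a (emb y)) =
      rowMapA (fun x => f x y) (σ.symm y) (τ.symm y) := by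
  funext a
  have hy : ((emb y : Fin (n+2)).val < n) := y.isLt
  by_cases ha : a.val < n
  · have c1 : ((⟨a.val, ha⟩ : Fin n) = σ.symm y) = (y = σ ⟨a.val, ha⟩) := by
      rw [Equiv.eq_symm_apply]; exact propext eq_comm
    have c2 : ((⟨a.val, ha⟩ : Fin n) = τ.symm y) = (y = τ ⟨a.val, ha⟩) := by
      rw [Equiv.eq_symm_apply]; exact propext eq_comm
    simp only [starOp, dif_pos ha, rowMapA, dif_pos hy, mk_val_emb, c1, c2]
  · by_cases ha2 : a.val = n
    · simp only [starOp, dif_neg ha, if_pos ha2, rowMapB, rowMapA, dif_pos hy,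
        mk_val_emb, dif_neg ha]
    · simp only [starOp, dif_neg ha, if_neg ha2, rowMapB, rowMapA, dif_pos hy,
        mk_val_emb, dif_neg ha]

lemma col_el0 :
    (fun a => starOp f σ τ a el0) = rowMapB (fun x => f x (σ x)) true := by
  funext a
  have h0lt : ¬ ((el0 : Fin (n+2)).val < n) := by simp [el0]
  have h0eq : (el0 : Fin (n+2)).val = n := rfl
  by_cases ha : a.val < n
  · simp only [starOp, dif_pos ha, rowMapA, dif_neg h0lt, if_pos h0eq, rowMapB]
  · by_cases ha2 : a.val = n
    · simp only [starOp, dif_neg ha, if_pos ha2, rowMapB, dif_neg h0lt, if_pos h0eq]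
    · simp only [starOp, dif_neg ha, if_neg ha2, rowMapB, dif_neg h0lt, if_pos h0eq]
      rfl

lemma col_el1 :
    (fun a => starOp f σ τ a el1) = rowMapB (fun x => f x (τ x)) false := by
  funext a
  have h1lt : ¬ ((el1 : Fin (n+2)).val < n) := by simp [el1]
  have h1ne : ¬ ((el1 : Fin (n+2)).val = n) := by simp [el1]
  by_cases ha : a.val < n
  · simp only [starOp, dif_pos ha, rowMapA, dif_neg h1lt, if_neg h1ne, rowMapB]
  · by_cases ha2 : a.val = n
    · simp only [starOp, dif_neg ha, if_pos ha2, rowMapB, dif_neg h1lt, if_neg h1ne]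
      rfl
    · simp only [starOp, dif_neg ha, if_neg ha2, rowMapB, dif_neg h1lt, if_neg h1ne]

end TwoStep

open TwoStep

/-- **Two-step prolongation.**  Let `f` be a quasigroup operation of order
`n ≥ 1` on `Fin n` possessing two disjoint complete mappings `σ` and `τ`.
Then there is a quasigroup operation `star` of order `n+2` on `Fin (n+2)`
which agrees with `f` on all cells of the original Latin square not lying on
the two transversals (identifying `Fin n` with the first `n` elements of
`Fin (n+2)` via `Fin.castAdd 2`). -/
theorem two_step_prolongation_exists
    (n : ℕ) (hn : 1 ≤ n)
    (f : Fin n → Fin n → Fin n) (hf : IsQuasigroup f)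
    (σ τ : Equiv.Perm (Fin n))
    (hσ : Function.Bijective (fun x => f x (σ x)))
    (hτ : Function.Bijective (fun x => f x (τ x)))
    (hdisj : ∀ x : Fin n, σ x ≠ τ x) :
    ∃ star : Fin (n + 2) → Fin (n + 2) → Fin (n + 2),
      IsQuasigroup star ∧
      ∀ x y : Fin n, y ≠ σ x → y ≠ τ x →
        star (Fin.castAdd 2 x) (Fin.castAdd 2 y) = Fin.castAdd 2 (f x y) := by
  classical
  have hστ : ∀ y : Fin n, σ.symm y ≠ τ.symm y := by
    intro y h
    apply hdisj (σ.symm y)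
    rw [Equiv.apply_symm_apply, h, Equiv.apply_symm_apply]
  refine ⟨starOp f σ τ, ?_, ?_⟩
  · intro a
    constructor
    · -- rows
      by_cases ha : a.val < n
      · have hrow : (fun b => starOp f σ τ a b) =
            rowMapA (f ⟨a.val, ha⟩) (σ ⟨a.val, ha⟩) (τ ⟨a.val, ha⟩) := by
          funext b; simp only [starOp, dif_pos ha]
        rw [hrow]
        exact Finite.injective_iff_bijective.mp
          (rowMapA_inj _ (hf ⟨a.val, ha⟩).1.injective _ _ (hdisj _))
      · by_cases ha2 : a.val = n
        · have hrow : (fun b => starOp f σ τ a b) =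
              rowMapB (fun y => f (σ.symm y) y) true := by
            funext b; simp only [starOp, dif_neg ha, if_pos ha2]
          rw [hrow]
          refine Finite.injective_iff_bijective.mp (rowMapB_inj _ ?_ _)
          have he : (fun y => f (σ.symm y) y) = (fun x => f x (σ x)) ∘ σ.symm := by
            funext y; simp
          rw [he]; exact hσ.injective.comp σ.symm.injective
        · have hrow : (fun b => starOp f σ τ a b) =
              rowMapB (fun y => f (τ.symm y) y) false := by
            funext b; simp only [starOp, dif_neg ha, if_neg ha2]
          rw [hrow]
          refine Finite.injective_iff_bijective.mp (rowMapB_inj _ ?_ _)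
          have he : (fun y => f (τ.symm y) y) = (fun x => f x (τ x)) ∘ τ.symm := by
            funext y; simp
          rw [he]; exact hτ.injective.comp τ.symm.injective
    · -- columns
      by_cases ha : a.val < n
      · have hae : a = emb (⟨a.val, ha⟩ : Fin n) := Fin.ext rfl
        rw [hae, col_emb f σ τ ⟨a.val, ha⟩]
        exact Finite.injective_iff_bijective.mp
          (rowMapA_inj _ (hf ⟨a.val, ha⟩).2.injective _ _ (hστ _))
      · by_cases ha2 : a.val = n
        · have hae : a = el0 := Fin.ext ha2
          rw [hae, col_el0 f σ τ]
          exact Finite.injective_iff_bijective.mp (rowMapB_inj _ hσ.injective _)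
        · have hae : a = el1 := Fin.ext (show a.val = n+1 by have := a.isLt; omega)
          rw [hae, col_el1 f σ τ]
          exact Finite.injective_iff_bijective.mp (rowMapB_inj _ hτ.injective _)
  · intro x y h1 h2
    show starOp f σ τ (emb x) (emb y) = emb (f x y)
    have hx : ((emb x : Fin (n+2)).val < n) := x.isLt
    have hy : ((emb y : Fin (n+2)).val < n) := y.isLt
    simp only [starOp, dif_pos hx, rowMapA, dif_pos hy, mk_val_emb]
    rw [if_neg h1, if_neg h2]
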